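/- Let n ≥ 2 be an integer and let H > (n-1)/n. Then there exists a unique a > 0 with M_{H,0}(a) = 0; moreover M_{H,0}(t) > 0 for 0 < t < a, M_{H,0}(t) < 0 for t > a, and the function Q_{H,0} is integrable on the interval (0, a) (the improper integral converges at both endpoints). -/

import Mathlib

open Filter Topology

/-- `Ifun m t = ∫₀ᵗ sinh^m(r) dr`. -/
noncomputable def Ifun (m : ℕ) (t : ℝ) : ℝ := ∫ r in (0:ℝ)..t, Real.sinh r ^ m

/-- `Mfun n H d t = sinh^{n-1}(t) − nH·I_{n-1}(t) − d`. -/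
noncomputable def Mfun (n : ℕ) (H d t : ℝ) : ℝ :=
  Real.sinh t ^ (n - 1) - n * H * Ifun (n - 1) t - d

/-- `Pfun n H d t = sinh^{n-1}(t) + nH·I_{n-1}(t) + d`. -/
noncomputable def Pfun (n : ℕ) (H d t : ℝ) : ℝ :=
  Real.sinh t ^ (n - 1) + n * H * Ifun (n - 1) t + d

/-- `Qfun n H d t = (nH·I_{n-1}(t) + d)/√(M·P)`. -/
noncomputable def Qfun (n : ℕ) (H d t : ℝ) : ℝ :=
  (n * H * Ifun (n - 1) t + d) / Real.sqrt (Mfun n H d t * Pfun n H d t)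


open Real MeasureTheory

lemma Ifun_hasDerivAt (m : ℕ) (t : ℝ) : HasDerivAt (Ifun m) (Real.sinh t ^ m) t := by
  have hc : Continuous fun r : ℝ => Real.sinh r ^ m := Real.continuous_sinh.pow m
  exact intervalIntegral.integral_hasDerivAt_right (hc.intervalIntegrable _ _)
    hc.aestronglyMeasurable.stronglyMeasurableAtFilter hc.continuousAt

lemma Ifun_continuous (m : ℕ) : Continuous (Ifun m) :=
  continuous_iff_continuousAt.2 fun t => (Ifun_hasDerivAt m t).continuousAt

lemma Ifun_zero (m : ℕ) : Ifun m 0 = 0 := by simp [Ifun]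

lemma Ifun_monotoneOn (m : ℕ) : MonotoneOn (Ifun m) (Set.Ici 0) := by
  apply monotoneOn_of_deriv_nonneg (convex_Ici 0) (Ifun_continuous m).continuousOn
    (fun x _ => ((Ifun_hasDerivAt m x).differentiableAt).differentiableWithinAt)
  intro x hx
  rw [interior_Ici] at hx
  rw [(Ifun_hasDerivAt m x).deriv]
  exact pow_nonneg (Real.sinh_nonneg_iff.2 (le_of_lt hx)) m

lemma Ifun_nonneg (m : ℕ) {t : ℝ} (ht : 0 ≤ t) : 0 ≤ Ifun m t := by
  have := Ifun_monotoneOn m (Set.self_mem_Ici) ht ht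
  rwa [Ifun_zero] at this

lemma Ifun_le (m : ℕ) {t : ℝ} (ht : 0 ≤ t) : Ifun m t ≤ t * Real.sinh t ^ m := by
  have h1 : Ifun m t ≤ ∫ _ in (0:ℝ)..t, Real.sinh t ^ m := by
    apply intervalIntegral.integral_mono_on ht
      ((Real.continuous_sinh.pow m).intervalIntegrable _ _)
      (intervalIntegrable_const)
    intro x hx
    exact pow_le_pow_left₀ (Real.sinh_nonneg_iff.2 hx.1) (Real.sinh_le_sinh.2 hx.2) m
  simpa using h1

noncomputable def gfun (k : ℕ) (c t : ℝ) : ℝ := ((k:ℝ)+1) * Real.cosh t - c * Real.sinh t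

lemma gfun_hasDerivAt (k : ℕ) (c t : ℝ) :
    HasDerivAt (gfun k c) (((k:ℝ)+1) * Real.sinh t - c * Real.cosh t) t := by
  exact ((Real.hasDerivAt_cosh t).const_mul ((k:ℝ)+1)).sub
    ((Real.hasDerivAt_sinh t).const_mul c)

lemma gfun_continuous (k : ℕ) (c : ℝ) : Continuous (gfun k c) := by
  unfold gfun; continuity

lemma gfun_zero (k : ℕ) (c : ℝ) : gfun k c 0 = (k:ℝ)+1 := by simp [gfun]

lemma gfun_strictAntiOn (k : ℕ) {c : ℝ} (hc : (k:ℝ)+1 < c) :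
    StrictAntiOn (gfun k c) (Set.Ici 0) := by
  apply strictAntiOn_of_deriv_neg (convex_Ici 0) (gfun_continuous k c).continuousOn
  intro x hx
  rw [interior_Ici] at hx
  rw [(gfun_hasDerivAt k c x).deriv]
  have h1 : Real.sinh x < Real.cosh x := Real.sinh_lt_cosh x
  have h2 : 0 < Real.sinh x := Real.sinh_pos_iff.2 hx
  have hk : (0:ℝ) < (k:ℝ)+1 := by positivity
  nlinarith

lemma gfun_upper (k : ℕ) (c : ℝ) {t : ℝ} (ht : 0 ≤ t) :
    gfun k c t ≤ ((k:ℝ)+1) - (c - ((k:ℝ)+1)) * Real.sinh t := by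
  have h : Real.cosh t ≤ Real.sinh t + 1 := by
    have := Real.cosh_sub_sinh t
    have h2 : Real.exp (-t) ≤ 1 := Real.exp_le_one_iff.2 (by linarith)
    linarith
  have hk : (0:ℝ) ≤ (k:ℝ)+1 := by positivity
  have := mul_le_mul_of_nonneg_left h hk
  simp only [gfun]; nlinarith

noncomputable def Maux (k : ℕ) (c t : ℝ) : ℝ := Real.sinh t ^ (k+1) - c * Ifun (k+1) t

lemma Maux_hasDerivAt (k : ℕ) (c t : ℝ) :
    HasDerivAt (Maux k c) (Real.sinh t ^ k * gfun k c t) t := by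
  have h1 : HasDerivAt (fun t => Real.sinh t ^ (k+1))
      ((((k:ℕ)+1 : ℕ):ℝ) * Real.sinh t ^ ((k+1)-1) * Real.cosh t) t :=
    (Real.hasDerivAt_sinh t).pow (k+1)
  have h2 := (Ifun_hasDerivAt (k+1) t).const_mul c
  have : HasDerivAt (Maux k c) _ t := h1.sub h2
  convert this using 1
  simp only [Nat.add_sub_cancel, gfun]
  push_cast
  ring

lemma Maux_continuous (k : ℕ) (c : ℝ) : Continuous (Maux k c) :=
  continuous_iff_continuousAt.2 fun t => (Maux_hasDerivAt k c t).continuousAt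

lemma Maux_zero (k : ℕ) (c : ℝ) : Maux k c 0 = 0 := by
  simp [Maux, Ifun_zero]

lemma Maux_main (k : ℕ) {c : ℝ} (hc : (k:ℝ)+1 < c) :
    ∃ t₀ a : ℝ, 0 < t₀ ∧ t₀ < a ∧ gfun k c t₀ = 0 ∧ Maux k c a = 0 ∧
      (∀ t, 0 < t → t < a → 0 < Maux k c t) ∧
      (∀ t, a < t → Maux k c t < 0) := by
  have hcpos : (0:ℝ) < c - ((k:ℝ)+1) := by linarith
  set T₁ : ℝ := max (Real.arsinh 1) (Real.arsinh (((k:ℝ)+2)/(c - ((k:ℝ)+1)))) with hT₁def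
  have hT₁0 : (0:ℝ) ≤ T₁ := le_trans (by rw [← Real.arsinh_zero]; exact Real.arsinh_le_arsinh.2 (by norm_num)) (le_max_left _ _)
  have hsinh1 : (1:ℝ) ≤ Real.sinh T₁ := by
    calc (1:ℝ) = Real.sinh (Real.arsinh 1) := (Real.sinh_arsinh 1).symm
    _ ≤ Real.sinh T₁ := Real.sinh_le_sinh.2 (le_max_left _ _)
  have hsinh2 : ((k:ℝ)+2)/(c - ((k:ℝ)+1)) ≤ Real.sinh T₁ := by
    calc ((k:ℝ)+2)/(c - ((k:ℝ)+1)) = Real.sinh (Real.arsinh _) := (Real.sinh_arsinh _).symm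
    _ ≤ Real.sinh T₁ := Real.sinh_le_sinh.2 (le_max_right _ _)
  have hgT : ∀ t, T₁ ≤ t → gfun k c t ≤ -1 := by
    intro t ht
    have h0t : (0:ℝ) ≤ t := le_trans hT₁0 ht
    have h1 := gfun_upper k c h0t
    have h2 : ((k:ℝ)+2)/(c - ((k:ℝ)+1)) ≤ Real.sinh t :=
      le_trans hsinh2 (Real.sinh_le_sinh.2 ht)
    have h3 : (k:ℝ)+2 ≤ (c - ((k:ℝ)+1)) * Real.sinh t := by
      rw [div_le_iff₀ hcpos] at h2; linarith [h2]
    linarith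
  -- t₀ : zero of g
  have hivt := intermediate_value_Icc' hT₁0 (gfun_continuous k c).continuousOn
  have h0mem : (0:ℝ) ∈ Set.Icc (gfun k c T₁) (gfun k c 0) := by
    constructor
    · linarith [hgT T₁ le_rfl]
    · rw [gfun_zero]; positivity
    
  obtain ⟨t₀, ht₀mem, hgt₀⟩ := hivt h0mem
  have ht₀pos : 0 < t₀ := by
    rcases lt_or_eq_of_le ht₀mem.1 with h | h
    · exact h
    · exfalso; have : (0:ℝ) < (k:ℝ)+1 := by positivity
      rw [← h, gfun_zero] at hgt₀; linarith
  have hganti := gfun_strictAntiOn k hc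
  have hgneg : ∀ t, t₀ < t → gfun k c t < 0 := by
    intro t ht
    have := hganti (Set.mem_Ici.2 ht₀mem.1) (Set.mem_Ici.2 (by linarith : (0:ℝ) ≤ t)) ht
    rwa [hgt₀] at this
  have hgpos : ∀ t, 0 ≤ t → t < t₀ → 0 < gfun k c t := by
    intro t h0 ht
    have := hganti (Set.mem_Ici.2 h0) (Set.mem_Ici.2 ht₀mem.1) ht
    rwa [hgt₀] at this
  -- M strict mono on [0,t₀]
  have hMmono : StrictMonoOn (Maux k c) (Set.Icc 0 t₀) := by
    apply strictMonoOn_of_deriv_pos (convex_Icc 0 t₀) (Maux_continuous k c).continuousOn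
    intro x hx
    rw [interior_Icc] at hx
    rw [(Maux_hasDerivAt k c x).deriv]
    exact mul_pos (pow_pos (Real.sinh_pos_iff.2 hx.1) k) (hgpos x hx.1.le hx.2)
  -- M strict anti on [t₀,∞)
  have hManti : StrictAntiOn (Maux k c) (Set.Ici t₀) := by
    apply strictAntiOn_of_deriv_neg (convex_Ici t₀) (Maux_continuous k c).continuousOn
    intro x hx
    rw [interior_Ici] at hx
    rw [(Maux_hasDerivAt k c x).deriv]
    exact mul_neg_of_pos_of_neg (pow_pos (Real.sinh_pos_iff.2 (lt_trans ht₀pos hx)) k)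
      (hgneg x hx)
  have hMt₀ : 0 < Maux k c t₀ := by
    have := hMmono (Set.left_mem_Icc.2 ht₀pos.le) (Set.right_mem_Icc.2 ht₀pos.le) ht₀pos
    rwa [Maux_zero] at this
  -- M decreases at rate ≥ 1 beyond T₁
  have hanti2 : AntitoneOn (fun t => Maux k c t + t) (Set.Ici T₁) := by
    apply antitoneOn_of_deriv_nonpos (convex_Ici T₁)
      (((Maux_continuous k c).add continuous_id).continuousOn)
    · intro x _
      exact (((Maux_hasDerivAt k c x).add (hasDerivAt_id x)).differentiableAt).differentiableWithinAt
    · intro x hx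
      rw [interior_Ici] at hx
      rw [(((Maux_hasDerivAt k c x).add (hasDerivAt_id x)).deriv)]
      have hgx : gfun k c x ≤ -1 := hgT x hx.le
      have hs : (1:ℝ) ≤ Real.sinh x ^ k :=
        one_le_pow₀ (le_trans hsinh1 (Real.sinh_le_sinh.2 hx.le))
      have : Real.sinh x ^ k * gfun k c x ≤ 1 * gfun k c x :=
        mul_le_mul_of_nonpos_right hs (by linarith)
      simp only [one_mul] at this
      linarith
  set T₂ : ℝ := T₁ + |Maux k c T₁| + 1 with hT₂def
  have hT₁T₂ : T₁ ≤ T₂ := by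
    have := abs_nonneg (Maux k c T₁); linarith
  have hMT₂ : Maux k c T₂ < 0 := by
    have h := hanti2 (Set.self_mem_Ici) (Set.mem_Ici.2 hT₁T₂) hT₁T₂
    have := le_abs_self (Maux k c T₁)
    simp only [hT₂def] at h ⊢
    linarith
  have ht₀T₂ : t₀ ≤ T₂ := le_trans ht₀mem.2 hT₁T₂
  -- IVT for M
  have hivt2 := intermediate_value_Icc' ht₀T₂ (Maux_continuous k c).continuousOn
  obtain ⟨a, hamem, hMa⟩ := hivt2 ⟨hMT₂.le, hMt₀.le⟩
  have hat₀ : t₀ < a := by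
    rcases lt_or_eq_of_le hamem.1 with h | h
    · exact h
    · exfalso; rw [← h] at hMa; linarith
  refine ⟨t₀, a, ht₀pos, hat₀, hgt₀, hMa, ?_, ?_⟩
  · intro t ht hta
    rcases le_or_gt t t₀ with h | h
    · rcases lt_or_eq_of_le h with h' | h'
      · have := hMmono (Set.mem_Icc.2 ⟨le_rfl, ht₀pos.le⟩) (Set.mem_Icc.2 ⟨ht.le, h⟩) ht
        rwa [Maux_zero] at this
      · rw [h']; exact hMt₀
    · have := hManti (Set.mem_Ici.2 h.le) (Set.mem_Ici.2 hamem.1) hta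
      rwa [hMa] at this
  · intro t hta
    have := hManti (Set.mem_Ici.2 hamem.1) (Set.mem_Ici.2 (by linarith : t₀ ≤ t)) hta
    rwa [hMa] at this

noncomputable def Paux (k : ℕ) (c t : ℝ) : ℝ := Real.sinh t ^ (k+1) + c * Ifun (k+1) t

noncomputable def Qaux (k : ℕ) (c t : ℝ) : ℝ :=
  c * Ifun (k+1) t / Real.sqrt (Maux k c t * Paux k c t)

lemma Paux_continuous (k : ℕ) (c : ℝ) : Continuous (Paux k c) := by
  unfold Paux; exact (Real.continuous_sinh.pow _).add (continuous_const.mul (Ifun_continuous _))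

/-- Let `n ≥ 2` and `H > (n-1)/n`. Then there is a unique `a > 0` with `M_{H,0}(a) = 0`;
moreover `M_{H,0} > 0` on `(0,a)`, `M_{H,0} < 0` on `(a,∞)`, and `Q_{H,0}` is integrable
on `(0, a)`. -/
theorem stmt14 (n : ℕ) (hn : 2 ≤ n) (H : ℝ) (hH : ((n : ℝ) - 1) / n < H) :
    ∃ a : ℝ, 0 < a ∧ Mfun n H 0 a = 0 ∧
      (∀ t, 0 < t → t < a → 0 < Mfun n H 0 t) ∧
      (∀ t, a < t → Mfun n H 0 t < 0) ∧
      (∀ a', 0 < a' → Mfun n H 0 a' = 0 → a' = a) ∧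
      MeasureTheory.IntegrableOn (Qfun n H 0) (Set.Ioo 0 a) := by
  obtain ⟨k, rfl⟩ : ∃ k, n = k + 2 := ⟨n - 2, by omega⟩
  obtain ⟨c, hcdef⟩ : ∃ x : ℝ , x = ((k:ℝ)+2)*H := ⟨_, rfl⟩
  have hc : (k:ℝ)+1 < c := by
    push_cast at hH
    rw [div_lt_iff₀ (by positivity : (0:ℝ) < (k:ℝ)+2)] at hH
    rw [hcdef]; linarith
  have hcpos : (0:ℝ) < c := lt_trans (by positivity) hc
  have hMfunEq : ∀ t, Mfun (k+2) H 0 t = Maux k c t := by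
    intro t
    show Real.sinh t ^ (k+1) - ((k+2:ℕ):ℝ)*H*Ifun (k+1) t - 0 = _
    rw [Maux, hcdef]; push_cast; ring
  have hPfunEq : ∀ t, Pfun (k+2) H 0 t = Paux k c t := by
    intro t
    show Real.sinh t ^ (k+1) + ((k+2:ℕ):ℝ)*H*Ifun (k+1) t + 0 = _
    rw [Paux, hcdef]; push_cast; ring
  have hQfunEq : Qfun (k+2) H 0 = Qaux k c := by
    funext t
    show (((k+2:ℕ):ℝ)*H*Ifun (k+1) t + 0) /
        Real.sqrt (Mfun (k+2) H 0 t * Pfun (k+2) H 0 t) = _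
    rw [hMfunEq t, hPfunEq t, Qaux, hcdef]; push_cast; ring_nf
  obtain ⟨t₀, a, ht₀pos, ht₀a, hgt₀, hMa, hMpos, hMneg⟩ := Maux_main k hc
  have hapos : 0 < a := lt_trans ht₀pos ht₀a
  refine ⟨a, hapos, by rw [hMfunEq a]; exact hMa, ?_, ?_, ?_, ?_⟩
  · intro t ht hta; rw [hMfunEq]; exact hMpos t ht hta
  · intro t hta; rw [hMfunEq]; exact hMneg t hta
  · intro a' ha' hMa'
    rw [hMfunEq] at hMa'
    by_contra hne
    rcases lt_or_gt_of_ne hne with h | h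
    · exact absurd hMa' (ne_of_gt (hMpos a' ha' h))
    · exact absurd hMa' (ne_of_lt (hMneg a' h))
  -- integrability
  have hganti := gfun_strictAntiOn k hc
  obtain ⟨b, hbdef⟩ : ∃ x : ℝ , x = (t₀+a)/2 := ⟨_, rfl⟩
  have hbt₀ : t₀ < b := by rw [hbdef]; linarith
  have hba : b < a := by rw [hbdef]; linarith
  have hbpos : 0 < b := lt_trans ht₀pos hbt₀
  have hgb : gfun k c b < 0 := by
    have := hganti (Set.mem_Ici.2 ht₀pos.le) (Set.mem_Ici.2 hbpos.le) hbt₀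
    rwa [hgt₀] at this
  obtain ⟨δ, hδdef⟩ : ∃ x : ℝ , x = Real.sinh b ^ k * (-(gfun k c b)) := ⟨_, rfl⟩
  have hδpos : 0 < δ := by
    rw [hδdef]; exact mul_pos (pow_pos (Real.sinh_pos_iff.2 hbpos) k) (by linarith)
  have hMlow : ∀ t ∈ Set.Icc b a, δ*(a-t) ≤ Maux k c t := by
    have hanti : AntitoneOn (fun t => Maux k c t + δ*t) (Set.Icc b a) := by
      apply antitoneOn_of_deriv_nonpos (convex_Icc b a)
        ((Maux_continuous k c).add (continuous_const.mul continuous_id)).continuousOn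
      · intro x _
        exact (((Maux_hasDerivAt k c x).add
          ((hasDerivAt_id x).const_mul δ)).differentiableAt).differentiableWithinAt
      · intro x hx
        rw [interior_Icc] at hx
        show deriv (Maux k c + fun y => δ * id y) x ≤ 0
        rw [(((Maux_hasDerivAt k c x).add ((hasDerivAt_id x).const_mul δ)).deriv)]
        have hxb : b < x := hx.1
        have hx0 : (0:ℝ) ≤ x := by linarith
        have h1 : gfun k c x ≤ gfun k c b :=
          (hganti (Set.mem_Ici.2 hbpos.le) (Set.mem_Ici.2 hx0) hxb).le
        have h2 : Real.sinh b ^ k ≤ Real.sinh x ^ k :=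
          pow_le_pow_left₀ (Real.sinh_nonneg_iff.2 hbpos.le) (Real.sinh_le_sinh.2 hxb.le) k
        have hsx : (0:ℝ) ≤ Real.sinh x ^ k := pow_nonneg (Real.sinh_nonneg_iff.2 hx0) k
        have h3 : Real.sinh x ^ k * gfun k c x ≤ Real.sinh x ^ k * gfun k c b :=
          mul_le_mul_of_nonneg_left h1 hsx
        have h4 : Real.sinh x ^ k * gfun k c b ≤ Real.sinh b ^ k * gfun k c b :=
          mul_le_mul_of_nonpos_right h2 hgb.le
        have h5 : Real.sinh b ^ k * gfun k c b = -δ := by rw [hδdef]; ring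
        simp only [mul_one]
        linarith
    intro t ht
    have h := hanti ht (Set.right_mem_Icc.2 (le_of_lt hba)) ht.2
    simp only [hMa] at h
    have hexp : δ*(a-t) = δ*a - δ*t := by ring
    linarith
  have hImono := Ifun_monotoneOn (k+1)
  obtain ⟨ε, hεdef⟩ : ∃ x : ℝ , x = min (1/(2*c)) b := ⟨_, rfl⟩
  have hεpos : 0 < ε := by rw [hεdef]; exact lt_min (by positivity) hbpos
  have hεb : ε ≤ b := by rw [hεdef]; exact min_le_right _ _
  have hεc : ε ≤ 1/(2*c) := by rw [hεdef]; exact min_le_left _ _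
  have hQameas : Measurable (Qaux k c) := by
    unfold Qaux
    exact (continuous_const.mul (Ifun_continuous (k+1))).measurable.div
      (Real.continuous_sqrt.comp ((Maux_continuous k c).mul (Paux_continuous k c))).measurable
  have hQanonneg : ∀ t, 0 ≤ t → 0 ≤ Qaux k c t := fun t ht =>
    div_nonneg (mul_nonneg hcpos.le (Ifun_nonneg _ ht)) (Real.sqrt_nonneg _)
  have hA : IntegrableOn (Qaux k c) (Set.Ioc 0 ε) := by
    apply Integrable.mono' (g := fun _ => (1:ℝ))
      (integrableOn_const measure_Ioc_lt_top.ne)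
      hQameas.aestronglyMeasurable.restrict
    rw [ae_restrict_iff' measurableSet_Ioc]
    refine ae_of_all _ fun t ht => ?_
    obtain ⟨ht0, htε⟩ := ht
    have hts : 0 < Real.sinh t := Real.sinh_pos_iff.2 ht0
    obtain ⟨S, hSdef⟩ : ∃ x : ℝ, x = Real.sinh t ^ (k+1) := ⟨_, rfl⟩
    have hSpos : 0 < S := hSdef ▸ pow_pos hts _
    have hI1 : Ifun (k+1) t ≤ t * S := hSdef ▸ Ifun_le (k+1) ht0.le
    have hI0 : 0 ≤ Ifun (k+1) t := Ifun_nonneg _ ht0.le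
    have htc : c * t ≤ 1/2 := by
      have h := le_trans htε hεc
      rw [le_div_iff₀ (by positivity : (0:ℝ) < 2*c)] at h
      linarith
    have hMt : S/2 ≤ Maux k c t := by
      have h := mul_le_mul_of_nonneg_left hI1 hcpos.le
      have h2 : (c*t)*S ≤ (1/2)*S := mul_le_mul_of_nonneg_right htc hSpos.le
      have h3 : c*(t*S) = (c*t)*S := by ring
      rw [Maux, ← hSdef]
      linarith
    have hPt : S ≤ Paux k c t := by
      have h4 : 0 ≤ c * Ifun (k+1) t := mul_nonneg hcpos.le hI0
      rw [Paux, ← hSdef]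
      linarith
    have hprod : S/2 * S ≤ Maux k c t * Paux k c t :=
      mul_le_mul hMt hPt hSpos.le (by linarith)
    have hsqrt : S/2 ≤ Real.sqrt (Maux k c t * Paux k c t) := by
      apply Real.le_sqrt_of_sq_le
      have e1 : (S/2)^2 = S*S/4 := by ring
      have e2 : S/2*S = S*S/2 := by ring
      have e3 : 0 ≤ S*S := mul_nonneg hSpos.le hSpos.le
      linarith
    have hnum : c * Ifun (k+1) t ≤ S/2 := by
      have h := mul_le_mul_of_nonneg_left hI1 hcpos.le
      have h2 : (c*t)*S ≤ (1/2)*S := mul_le_mul_of_nonneg_right htc hSpos.le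
      have h3 : c*(t*S) = (c*t)*S := by ring
      linarith
    rw [Real.norm_eq_abs, abs_of_nonneg (hQanonneg t ht0.le), Qaux]
    rw [div_le_one (lt_of_lt_of_le (by linarith) hsqrt)]
    linarith
  have hB : IntegrableOn (Qaux k c) (Set.Icc ε b) := by
    apply ContinuousOn.integrableOn_compact isCompact_Icc
    unfold Qaux
    apply ContinuousOn.div (continuous_const.mul (Ifun_continuous (k+1))).continuousOn
      (Real.continuous_sqrt.comp ((Maux_continuous k c).mul (Paux_continuous k c))).continuousOn
    intro x hx
    have hx0 : 0 < x := lt_of_lt_of_le hεpos hx.1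
    have hxa : x < a := lt_of_le_of_lt hx.2 hba
    have hMx : 0 < Maux k c x := hMpos x hx0 hxa
    have hPx : 0 < Paux k c x := by
      have h1 := Ifun_nonneg (k+1) hx0.le
      have h2 := pow_pos (Real.sinh_pos_iff.2 hx0) (k+1)
      have h3 : 0 ≤ c * Ifun (k+1) x := mul_nonneg hcpos.le h1
      rw [Paux]; linarith
    exact ne_of_gt (Real.sqrt_pos.2 (mul_pos hMx hPx))
  obtain ⟨p, hpdef⟩ : ∃ x : ℝ , x = Real.sinh b ^ (k+1) := ⟨_, rfl⟩
  have hppos : 0 < p := by rw [hpdef]; exact pow_pos (Real.sinh_pos_iff.2 hbpos) _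
  obtain ⟨K, hKdef⟩ : ∃ x : ℝ , x = c * Ifun (k+1) a / Real.sqrt (δ * p) := ⟨_, rfl⟩
  have hC : IntegrableOn (Qaux k c) (Set.Ioo b a) := by
    have hbase : IntervalIntegrable (fun x : ℝ => x ^ (-(1/2) : ℝ)) volume 0 (a - b) :=
      intervalIntegral.intervalIntegrable_rpow' (by norm_num)
    have hcomp := (hbase.comp_sub_left a).symm
    have h2 : IntervalIntegrable (fun x : ℝ => (a - x) ^ (-(1/2):ℝ)) volume b a := by
      simpa using hcomp
    have h3 : IntegrableOn (fun x : ℝ => (a-x)^(-(1/2):ℝ)) (Set.Ioo b a) :=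
      (intervalIntegrable_iff_integrableOn_Ioo_of_le hba.le).1 h2
    apply Integrable.mono' (h3.const_mul K) hQameas.aestronglyMeasurable.restrict
    rw [ae_restrict_iff' measurableSet_Ioo]
    refine ae_of_all _ fun t ht => ?_
    obtain ⟨hbt, hta⟩ := ht
    have ht0 : 0 < t := lt_trans hbpos hbt
    have hat : 0 < a - t := by linarith
    have hMt : δ*(a-t) ≤ Maux k c t := hMlow t ⟨hbt.le, hta.le⟩
    have hPt : p ≤ Paux k c t := by
      have h1 : Real.sinh b ^ (k+1) ≤ Real.sinh t ^ (k+1) :=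
        pow_le_pow_left₀ (Real.sinh_nonneg_iff.2 hbpos.le) (Real.sinh_le_sinh.2 hbt.le) _
      have h2 : 0 ≤ c * Ifun (k+1) t := mul_nonneg hcpos.le (Ifun_nonneg _ ht0.le)
      rw [Paux, hpdef]; linarith
    have hprod : (δ*(a-t)) * p ≤ Maux k c t * Paux k c t :=
      mul_le_mul hMt hPt hppos.le (hMpos t ht0 hta).le
    have hsq : Real.sqrt ((δ*(a-t))*p) ≤ Real.sqrt (Maux k c t * Paux k c t) :=
      Real.sqrt_le_sqrt hprod
    have hsqpos : 0 < Real.sqrt ((δ*(a-t))*p) := Real.sqrt_pos.2 (by positivity)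
    have hnum : c * Ifun (k+1) t ≤ c * Ifun (k+1) a :=
      mul_le_mul_of_nonneg_left
        (hImono (Set.mem_Ici.2 ht0.le) (Set.mem_Ici.2 hapos.le) hta.le) hcpos.le
    rw [Real.norm_eq_abs, abs_of_nonneg (hQanonneg t ht0.le)]
    have hstep : Qaux k c t ≤ (c * Ifun (k+1) a) / Real.sqrt ((δ*(a-t))*p) := by
      rw [Qaux]
      exact div_le_div₀ (mul_nonneg hcpos.le (Ifun_nonneg _ hapos.le)) hnum hsqpos hsq
    refine le_trans hstep ?_
    have hre : (δ*(a-t))*p = (δ*p)*(a-t) := by ring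
    rw [hre, Real.sqrt_mul (by positivity : (0:ℝ) ≤ δ*p)]
    have hrpow : (a-t) ^ (-(1/2):ℝ) = 1/Real.sqrt (a-t) := by
      rw [Real.rpow_neg hat.le, Real.sqrt_eq_rpow]
      exact (one_div _).symm
    rw [hrpow, hKdef, div_mul_div_comm, mul_one]
  have hcover : Set.Ioo 0 a ⊆ (Set.Ioc 0 ε ∪ Set.Icc ε b) ∪ Set.Ioo b a := by
    rintro t ⟨h1, h2⟩
    by_cases hte : t ≤ ε
    · exact Or.inl (Or.inl ⟨h1, hte⟩)
    by_cases htb : t ≤ b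
    · exact Or.inl (Or.inr ⟨(not_le.1 hte).le, htb⟩)
    · exact Or.inr ⟨not_le.1 htb, h2⟩
  rw [hQfunEq]
  exact (((hA.union hB).union hC)).mono_set hcover
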